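/- Let S = k[X, Y] be the polynomial ring over a field k and set R₂ = k[X², X²Y, Y², X³, Y³] ⊆ S. Then S is the integral closure of R₂ in its field of fractions, and R₂ is not a weakly Arf ring: X² is a non-zerodivisor of R₂ with X³/X² ∈ S and X²Y/X² ∈ S, but (X³·X²Y)/X² = X³Y ∉ R₂. Consequently R₂ is not strictly closed. -/

import Mathlib

open scoped TensorProduct

open MvPolynomial

/-- `R` is a weakly Arf ring. -/
def IsWeaklyArf (R : Type*) [CommRing R] : Prop :=
  ∀ x y z : R, x ∈ nonZeroDivisors R →
    (∃ u ∈ integralClosure R (FractionRing R),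
        u * algebraMap R (FractionRing R) x = algebraMap R (FractionRing R) y) →
    (∃ v ∈ integralClosure R (FractionRing R),
        v * algebraMap R (FractionRing R) x = algebraMap R (FractionRing R) z) →
    ∃ r : R, algebraMap R (FractionRing R) r * algebraMap R (FractionRing R) x
        = algebraMap R (FractionRing R) (y * z)

/-- `R` is strictly closed in the `R`-algebra `S`. -/
def IsStrictlyClosedIn (R S : Type*) [CommRing R] [CommRing S] [Algebra R S] : Prop :=
  ∀ s : S, s ⊗ₜ[R] (1 : S) = (1 : S) ⊗ₜ[R] s → s ∈ (algebraMap R S).range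

/-- `R` is strictly closed (in the integral closure `R̄` of `R` in its total ring of
fractions `Q(R)`). -/
def IsStrictlyClosed (R : Type*) [CommRing R] : Prop :=
  IsStrictlyClosedIn R (integralClosure R (FractionRing R))

/-- `R₂ = k[X², X²Y, Y², X³, Y³]` inside `S = k[X, Y]`. -/
noncomputable def R₂alg (k : Type*) [Field k] : Subalgebra k (MvPolynomial (Fin 2) k) :=
  Algebra.adjoin k {X 0 ^ 2, X 0 ^ 2 * X 1, X 1 ^ 2, X 0 ^ 3, X 1 ^ 3}


section Aux1
variable (k : Type*) [Field k]

lemma pow_mem_of_sq_cube {A : Type*} [CommRing A] [Algebra k A] (T : Subalgebra k A)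
    {x : A} (h2 : x ^ 2 ∈ T) (h3 : x ^ 3 ∈ T) {n : ℕ} (hn : 2 ≤ n) : x ^ n ∈ T := by
  rcases Nat.even_or_odd n with ⟨m, hm⟩ | ⟨m, hm⟩
  · obtain rfl : n = 2 * m := by omega
    rw [pow_mul]; exact pow_mem h2 m
  · obtain ⟨l, rfl⟩ : ∃ l, n = 2 * l + 3 := ⟨m - 1, by omega⟩
    rw [pow_add, pow_mul]; exact mul_mem (pow_mem h2 l) h3

lemma hgen2 : (X 0 ^ 2 : MvPolynomial (Fin 2) k) ∈ R₂alg k := Algebra.subset_adjoin (by simp)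
lemma hgen2y : (X 0 ^ 2 * X 1 : MvPolynomial (Fin 2) k) ∈ R₂alg k :=
  Algebra.subset_adjoin (by simp)
lemma hgeny2 : (X 1 ^ 2 : MvPolynomial (Fin 2) k) ∈ R₂alg k := Algebra.subset_adjoin (by simp)
lemma hgen3 : (X 0 ^ 3 : MvPolynomial (Fin 2) k) ∈ R₂alg k := Algebra.subset_adjoin (by simp)
lemma hgeny3 : (X 1 ^ 3 : MvPolynomial (Fin 2) k) ∈ R₂alg k := Algebra.subset_adjoin (by simp)

lemma monomial_mem_R₂ (a : k) (v : Fin 2 →₀ ℕ) (h0 : v 0 = 0 ∨ 2 ≤ v 0)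
    (h1 : v 1 = 0 ∨ 2 ≤ v 1) : monomial v a ∈ R₂alg k := by
  have hv : v = Finsupp.single 0 (v 0) + Finsupp.single (1 : Fin 2) (v 1) := by
    ext i; fin_cases i <;> simp [Finsupp.single_apply]
  have heq : monomial v a = C a * X 0 ^ (v 0) * X 1 ^ (v 1) := by
    conv_lhs => rw [hv, monomial_single_add, ← add_zero (Finsupp.single (1 : Fin 2) (v 1)),
      monomial_single_add, monomial_zero']
    ring
  rw [heq]
  have m0 : (X 0 : MvPolynomial (Fin 2) k) ^ (v 0) ∈ R₂alg k := by
    rcases h0 with h | h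
    · rw [h, pow_zero]; exact one_mem _
    · exact pow_mem_of_sq_cube k _ (hgen2 k) (hgen3 k) h
  have m1 : (X 1 : MvPolynomial (Fin 2) k) ^ (v 1) ∈ R₂alg k := by
    rcases h1 with h | h
    · rw [h, pow_zero]; exact one_mem _
    · exact pow_mem_of_sq_cube k _ (hgeny2 k) (hgeny3 k) h
  exact mul_mem (mul_mem ((R₂alg k).algebraMap_mem a) m0) m1

lemma key_mul_mem (p : MvPolynomial (Fin 2) k) :
    X 0 ^ 2 * X 1 ^ 2 * p ∈ R₂alg k := by
  induction p using MvPolynomial.induction_on' with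
  | monomial u a =>
    have : (X 0 ^ 2 * X 1 ^ 2 : MvPolynomial (Fin 2) k) * monomial u a
        = monomial (Finsupp.single 0 2 + Finsupp.single 1 2 + u) a := by
      rw [X_pow_eq_monomial, X_pow_eq_monomial, monomial_mul, monomial_mul, one_mul, one_mul]
    rw [this]
    apply monomial_mem_R₂ <;>
      simp [Finsupp.add_apply, Finsupp.single_apply]
  | add p q hp hq => rw [mul_add]; exact add_mem hp hq

end Aux1

section Aux2
variable (k : Type*) [Field k]

def goodExp (d : Fin 2 →₀ ℕ) : Prop := d 0 ≠ 1 ∧ (d 1 = 1 → d 0 = 2 ∨ 4 ≤ d 0)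

lemma goodExp_add {d e : Fin 2 →₀ ℕ} (hd : goodExp d) (he : goodExp e) : goodExp (d + e) := by
  obtain ⟨hd1, hd2⟩ := hd; obtain ⟨he1, he2⟩ := he
  constructor <;> simp only [Finsupp.add_apply]
  · omega
  · intro h
    have : d 1 = 1 ∧ e 1 = 0 ∨ d 1 = 0 ∧ e 1 = 1 := by omega
    rcases this with ⟨h1, _⟩ | ⟨_, h1⟩
    · have := hd2 h1; omega
    · have := he2 h1; omega

noncomputable def Pbad : Subalgebra k (MvPolynomial (Fin 2) k) where
  carrier := {p | ∀ d ∈ p.support, goodExp d}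
  mul_mem' {p q} hp hq := by
    intro d hd
    obtain ⟨a, ha, b, hb, rfl⟩ := Finset.mem_add.mp (MvPolynomial.support_mul p q hd)
    exact goodExp_add (hp a ha) (hq b hb)
  add_mem' {p q} hp hq := by
    intro d hd
    rcases Finset.mem_union.mp (MvPolynomial.support_add hd) with h | h
    · exact hp d h
    · exact hq d h
  algebraMap_mem' a := by
    intro d hd
    have : d = 0 := by
      by_contra h
      exact (MvPolynomial.mem_support_iff.mp hd) (by simp [MvPolynomial.coeff_C, Ne.symm h])
    subst this
    exact ⟨by simp, by simp⟩

lemma R₂alg_le_Pbad : R₂alg k ≤ Pbad k := by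
  apply Algebra.adjoin_le
  intro g hg
  simp only [Set.mem_insert_iff, Set.mem_singleton_iff] at hg
  classical
  have hm : ∀ (v : Fin 2 →₀ ℕ), goodExp v → (monomial v (1:k)) ∈ Pbad k := by
    intro v hv d hd
    rw [MvPolynomial.support_monomial] at hd
    simp only [one_ne_zero, if_false, Finset.mem_singleton] at hd
    subst hd; exact hv
  rcases hg with rfl | rfl | rfl | rfl | rfl
  · rw [X_pow_eq_monomial]
    exact hm _ (by constructor <;> simp [Finsupp.single_apply])
  · rw [show (X 0 ^ 2 * X 1 : MvPolynomial (Fin 2) k)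
        = monomial (Finsupp.single 0 2 + Finsupp.single 1 1) 1 by
      rw [show (X 0 ^ 2 * X 1 : MvPolynomial (Fin 2) k)
          = monomial (Finsupp.single 0 2) 1 * monomial (Finsupp.single 1 1) 1 by
        rw [← X_pow_eq_monomial, ← X_pow_eq_monomial, pow_one], monomial_mul, one_mul]]
    exact hm _ (by constructor <;> simp [Finsupp.add_apply, Finsupp.single_apply])
  · rw [X_pow_eq_monomial]
    exact hm _ (by constructor <;> simp [Finsupp.single_apply])
  · rw [X_pow_eq_monomial]
    exact hm _ (by constructor <;> simp [Finsupp.single_apply])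
  · rw [X_pow_eq_monomial]
    exact hm _ (by constructor <;> simp [Finsupp.single_apply])

lemma X3Y_not_mem : (X 0 ^ 3 * X 1 : MvPolynomial (Fin 2) k) ∉ R₂alg k := by
  classical
  intro h
  have h' := R₂alg_le_Pbad k h
  have hx : (X 0 ^ 3 * X 1 : MvPolynomial (Fin 2) k)
      = monomial (Finsupp.single 0 3 + Finsupp.single 1 1) 1 := by
    rw [show (X 0 ^ 3 * X 1 : MvPolynomial (Fin 2) k)
        = monomial (Finsupp.single 0 3) 1 * monomial (Finsupp.single 1 1) 1 by
      rw [← X_pow_eq_monomial, ← X_pow_eq_monomial, pow_one], monomial_mul, one_mul]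
  rw [hx] at h'
  have := h' (Finsupp.single 0 3 + Finsupp.single 1 1) (by
    rw [MvPolynomial.support_monomial]; simp)
  obtain ⟨h1, h2⟩ := this
  have := h2 (by simp [Finsupp.add_apply, Finsupp.single_apply])
  simp [Finsupp.add_apply, Finsupp.single_apply] at this

end Aux2

section Aux3
set_option synthInstance.maxHeartbeats 1000000 in
set_option maxHeartbeats 1000000 in
lemma IsStrictlyClosed.isWeaklyArf {R : Type*} [CommRing R] (h : IsStrictlyClosed R) :
    IsWeaklyArf R := by
  rintro x y z hx ⟨u, hu, hux⟩ ⟨v, hv, hvx⟩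
  let A := integralClosure R (FractionRing R)
  let a : A := ⟨u, hu⟩
  let b : A := ⟨v, hv⟩
  have ha : a * algebraMap R A x = algebraMap R A y := Subtype.ext hux
  have hb : b * algebraMap R A x = algebraMap R A z := Subtype.ext hvx
  have swap : ∀ r : R, (algebraMap R A r) ⊗ₜ[R] (1 : A) = (1 : A) ⊗ₜ[R] (algebraMap R A r) :=
    fun r => by rw [Algebra.algebraMap_eq_smul_one, TensorProduct.smul_tmul]
  have key : (a * algebraMap R A z) ⊗ₜ[R] (1 : A) = (1 : A) ⊗ₜ[R] (a * algebraMap R A z) := by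
    calc (a * algebraMap R A z) ⊗ₜ[R] (1 : A)
        = (b * algebraMap R A y) ⊗ₜ[R] ((1 : A) * 1) := by
          rw [one_mul, ← ha, ← hb]; ring_nf
      _ = (b ⊗ₜ[R] (1 : A)) * ((algebraMap R A y) ⊗ₜ[R] (1 : A)) := by
          rw [Algebra.TensorProduct.tmul_mul_tmul]
      _ = (b ⊗ₜ[R] (1 : A)) * ((1 : A) ⊗ₜ[R] (algebraMap R A y)) := by rw [swap]
      _ = (b * 1) ⊗ₜ[R] ((1:A) * algebraMap R A y) := by rw [Algebra.TensorProduct.tmul_mul_tmul]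
      _ = ((1:A) * b) ⊗ₜ[R] (a * algebraMap R A x) := by rw [mul_one, one_mul, one_mul, ha]
      _ = ((1 : A) ⊗ₜ[R] a) * (b ⊗ₜ[R] (algebraMap R A x)) := by
          rw [Algebra.TensorProduct.tmul_mul_tmul]
      _ = ((1 : A) ⊗ₜ[R] a) * ((b ⊗ₜ[R] (1:A)) * ((1:A) ⊗ₜ[R] algebraMap R A x)) := by
          simp [Algebra.TensorProduct.tmul_mul_tmul]
      _ = ((1 : A) ⊗ₜ[R] a) * ((b ⊗ₜ[R] (1:A)) * ((algebraMap R A x) ⊗ₜ[R] (1:A))) := by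
          rw [swap]
      _ = ((1 : A) ⊗ₜ[R] a) * ((b * algebraMap R A x) ⊗ₜ[R] ((1:A)*1)) := by
          rw [Algebra.TensorProduct.tmul_mul_tmul]
      _ = ((1 : A) ⊗ₜ[R] a) * ((algebraMap R A z) ⊗ₜ[R] (1:A)) := by rw [one_mul, hb]
      _ = ((1 : A) ⊗ₜ[R] a) * ((1:A) ⊗ₜ[R] (algebraMap R A z)) := by rw [swap]
      _ = ((1:A) * 1) ⊗ₜ[R] (a * algebraMap R A z) := by
          rw [Algebra.TensorProduct.tmul_mul_tmul]
      _ = (1 : A) ⊗ₜ[R] (a * algebraMap R A z) := by rw [one_mul]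
  obtain ⟨r, hr⟩ := h _ key
  refine ⟨r, ?_⟩
  have hr' : algebraMap R (FractionRing R) r = u * algebraMap R (FractionRing R) z :=
    congrArg Subtype.val hr
  rw [hr', map_mul, mul_assoc, mul_comm (algebraMap R (FractionRing R) z), ← mul_assoc, hux]

end Aux3

section Aux4
variable (k : Type*) [Field k]
set_option synthInstance.maxHeartbeats 1000000 in
set_option maxHeartbeats 1000000 in
lemma frac_and_ic (K : Type*) [Field K] [Algebra (MvPolynomial (Fin 2) k) K]
    [IsFractionRing (MvPolynomial (Fin 2) k) K]
    [Algebra (R₂alg k) K]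
    (hcomp : algebraMap (R₂alg k) K
      = (algebraMap (MvPolynomial (Fin 2) k) K).comp (R₂alg k).val.toRingHom) :
    IsFractionRing (R₂alg k) K ∧
      (integralClosure (R₂alg k) K : Set K)
        = Set.range (algebraMap (MvPolynomial (Fin 2) k) K) := by
  have hAM : ∀ w : R₂alg k,
      algebraMap (R₂alg k) K w = algebraMap (MvPolynomial (Fin 2) k) K w.val := fun w => by
    rw [hcomp]; rfl
  haveI : @IsScalarTower (R₂alg k) (MvPolynomial (Fin 2) k) K Algebra.toSMul Algebra.toSMul
      Algebra.toSMul :=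
    IsScalarTower.of_algebraMap_eq (fun x => hAM x)
  have hSinj : Function.Injective (algebraMap (MvPolynomial (Fin 2) k) K) :=
    IsFractionRing.injective (MvPolynomial (Fin 2) k) K
  have hinj : Function.Injective (algebraMap (R₂alg k) K) := by
    intro p q hpq
    rw [hAM, hAM] at hpq
    exact Subtype.ext (hSinj hpq)
  constructor
  · refine ⟨fun s => ?_, fun z => ?_, fun {p q} hpq => ⟨1, by rw [hinj hpq]⟩⟩
    · rw [isUnit_iff_ne_zero, hAM]
      refine (map_ne_zero_iff _ hSinj).mpr ?_
      exact fun h0 => nonZeroDivisors.ne_zero s.2 (Subtype.ext h0)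
    · obtain ⟨⟨n, d⟩, hzd⟩ := IsLocalization.surj (nonZeroDivisors (MvPolynomial (Fin 2) k)) z
      obtain ⟨m, hm⟩ : ∃ m : MvPolynomial (Fin 2) k, m = X 0 ^ 2 * X 1 ^ 2 := ⟨_, rfl⟩
      have hm0 : m ≠ 0 := by
        rw [hm]; apply mul_ne_zero <;> exact pow_ne_zero _ (MvPolynomial.X_ne_zero _)
      have hmm : ∀ p : MvPolynomial (Fin 2) k, m * p ∈ R₂alg k := fun p => by
        rw [hm]; exact key_mul_mem k p
      have hD0 : (⟨m * d.val, hmm _⟩ : R₂alg k) ≠ 0 := by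
        intro h0
        exact mul_ne_zero hm0 (nonZeroDivisors.ne_zero d.2) (congrArg Subtype.val h0)
      refine ⟨⟨⟨m * n, hmm _⟩, ⟨⟨m * d.val, hmm _⟩,
        mem_nonZeroDivisors_of_ne_zero hD0⟩⟩, ?_⟩
      rw [hAM, hAM]
      show z * algebraMap (MvPolynomial (Fin 2) k) K (m * d.val)
          = algebraMap (MvPolynomial (Fin 2) k) K (m * n)
      rw [map_mul, map_mul, mul_left_comm, hzd]
  · ext α
    constructor
    · intro hα
      have hint : IsIntegral (MvPolynomial (Fin 2) k) α :=
        IsIntegral.tower_top (A := MvPolynomial (Fin 2) k) hα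
      obtain ⟨s, hs⟩ := IsIntegrallyClosed.isIntegral_iff.mp hint
      exact ⟨s, hs⟩
    · rintro ⟨s, rfl⟩
      have hX : ∀ i : Fin 2, IsIntegral (R₂alg k) (X i : MvPolynomial (Fin 2) k) := by
        intro i
        have hmem : (X i ^ 2 : MvPolynomial (Fin 2) k) ∈ R₂alg k := by
          fin_cases i
          · exact hgen2 k
          · exact hgeny2 k
        refine ⟨Polynomial.X ^ 2 - Polynomial.C (⟨X i ^ 2, hmem⟩ : R₂alg k),
          Polynomial.monic_X_pow_sub_C _ (by norm_num), ?_⟩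
        simp only [Polynomial.eval₂_sub, Polynomial.eval₂_X_pow, Polynomial.eval₂_C]
        show X i ^ 2 - (X i ^ 2 : MvPolynomial (Fin 2) k) = 0
        ring
      have hall : IsIntegral (R₂alg k) s := by
        apply IsIntegral.of_mem_closure' (R := R₂alg k)
          (Set.range (algebraMap (R₂alg k) (MvPolynomial (Fin 2) k)) ∪ {X 0, X 1})
        · rintro w (⟨r, rfl⟩ | hw)
          · exact isIntegral_algebraMap
          · rcases hw with rfl | rfl
            · exact hX 0
            · exact hX 1
        · have h1 : s ∈ Algebra.adjoin k (Set.range (X : Fin 2 → MvPolynomial (Fin 2) k)) := by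
            rw [MvPolynomial.adjoin_range_X]; trivial
          have h2 := Algebra.mem_adjoin_iff.mp h1
          refine Subring.closure_mono ?_ h2
          rintro w (⟨c, rfl⟩ | ⟨i, rfl⟩)
          · exact Or.inl ⟨⟨algebraMap k (MvPolynomial (Fin 2) k) c,
              (R₂alg k).algebraMap_mem c⟩, rfl⟩
          · right; fin_cases i
            · exact Or.inl rfl
            · exact Or.inr rfl
      have hcomp2 : (algebraMap (MvPolynomial (Fin 2) k) K).comp
          (algebraMap (R₂alg k) (MvPolynomial (Fin 2) k)) = algebraMap (R₂alg k) K :=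
        RingHom.ext fun w => (hAM w).symm
      obtain ⟨p, hmon, he⟩ := hall
      refine ⟨p, hmon, ?_⟩
      have h3 := congrArg (algebraMap (MvPolynomial (Fin 2) k) K) he
      rwa [Polynomial.hom_eval₂, hcomp2, map_zero] at h3

end Aux4

section Aux5
variable (k : Type*) [Field k]
set_option synthInstance.maxHeartbeats 1000000 in
set_option maxHeartbeats 1000000 in
lemma not_weaklyArf : ¬ IsWeaklyArf (R₂alg k) := by
  intro hWA
  set R := R₂alg k
  let x : R := ⟨X 0 ^ 2, hgen2 k⟩
  let y : R := ⟨X 0 ^ 3, hgen3 k⟩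
  let z : R := ⟨X 0 ^ 2 * X 1, hgen2y k⟩
  have hX2ne : (X 0 ^ 2 : MvPolynomial (Fin 2) k) ≠ 0 := pow_ne_zero _ (X_ne_zero 0)
  have hxne : x ≠ 0 := fun h => hX2ne (congrArg Subtype.val h)
  have hx : x ∈ nonZeroDivisors R := mem_nonZeroDivisors_of_ne_zero hxne
  set L := FractionRing R
  have hquad : ∀ (w c : R), w * w = x * x * c →
      ∃ s ∈ integralClosure R L, s * algebraMap R L x = algebraMap R L w := by
    intro w c hwc
    refine ⟨IsLocalization.mk' L w ⟨x, hx⟩, ?_, IsLocalization.mk'_spec _ _ _⟩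
    have hsq : IsLocalization.mk' L w ⟨x, hx⟩ * IsLocalization.mk' L w ⟨x, hx⟩
        = algebraMap R L c := by
      rw [← IsLocalization.mk'_mul]
      rw [IsLocalization.mk'_eq_iff_eq_mul]
      rw [← map_mul]
      congr 1
      rw [hwc]
      push_cast
      ring
    refine ⟨Polynomial.X ^ 2 - Polynomial.C c,
      Polynomial.monic_X_pow_sub_C _ (by norm_num), ?_⟩
    simp only [Polynomial.eval₂_sub, Polynomial.eval₂_X_pow, Polynomial.eval₂_C]
    rw [pow_two, hsq, sub_self]
  have hy' : y * y = x * x * x := by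
    apply Subtype.ext
    show (X 0 ^ 3 : MvPolynomial (Fin 2) k) * X 0 ^ 3 = X 0 ^ 2 * X 0 ^ 2 * X 0 ^ 2
    ring
  have hz' : z * z = x * x * ⟨X 1 ^ 2, hgeny2 k⟩ := by
    apply Subtype.ext
    show (X 0 ^ 2 * X 1 : MvPolynomial (Fin 2) k) * (X 0 ^ 2 * X 1)
        = X 0 ^ 2 * X 0 ^ 2 * X 1 ^ 2
    ring
  obtain ⟨r, hr⟩ := hWA x y z hx (hquad y x hy') (hquad z _ hz')
  rw [← map_mul] at hr
  have h1 : r * x = y * z := IsFractionRing.injective R L hr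
  have hval : (r : MvPolynomial (Fin 2) k) * X 0 ^ 2 = X 0 ^ 3 * (X 0 ^ 2 * X 1) := by
    have h2 := congrArg Subtype.val h1
    push_cast at h2
    exact h2
  have hc : X 0 ^ 2 * (r : MvPolynomial (Fin 2) k) = X 0 ^ 2 * (X 0 ^ 3 * X 1) := by
    linear_combination hval
  have hr3 : (r : MvPolynomial (Fin 2) k) = X 0 ^ 3 * X 1 := mul_left_cancel₀ hX2ne hc
  exact X3Y_not_mem k (hr3 ▸ r.2)

end Aux5

set_option synthInstance.maxHeartbeats 1000000 in
set_option maxHeartbeats 1000000 in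
/-- Let `S = k[X, Y]` and `R₂ = k[X², X²Y, Y², X³, Y³] ⊆ S`.  Then the
fraction field of `S` is a fraction field of `R₂` and `S` is the integral closure of `R₂` in
it.  Moreover `R₂` is not weakly Arf: `X²`, `X³` and `X²Y` belong to `R₂`, `X²` is a
non-zerodivisor, `X³/X² = X ∈ S` and `X²Y/X² = Y ∈ S`, but
`(X³·X²Y)/X² = X³Y ∉ R₂`.  Consequently `R₂` is not strictly closed. -/
theorem R₂alg_not_weaklyArf
    (k : Type*) [Field k]
    (K : Type*) [Field K] [Algebra (MvPolynomial (Fin 2) k) K]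
    [IsFractionRing (MvPolynomial (Fin 2) k) K] :
    (letI : Algebra (R₂alg k) K :=
      ((algebraMap (MvPolynomial (Fin 2) k) K).comp (R₂alg k).val.toRingHom).toAlgebra
     IsFractionRing (R₂alg k) K ∧
       (integralClosure (R₂alg k) K : Set K)
         = Set.range (algebraMap (MvPolynomial (Fin 2) k) K)) ∧
    ((X 0 ^ 2 : MvPolynomial (Fin 2) k) ∈ R₂alg k ∧
      (X 0 ^ 3 : MvPolynomial (Fin 2) k) ∈ R₂alg k ∧
      (X 0 ^ 2 * X 1 : MvPolynomial (Fin 2) k) ∈ R₂alg k ∧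
      (X 0 ^ 2 : MvPolynomial (Fin 2) k) ∈ nonZeroDivisors (MvPolynomial (Fin 2) k) ∧
      (X 0 ^ 3 * (X 0 ^ 2 * X 1) : MvPolynomial (Fin 2) k) = X 0 ^ 2 * (X 0 ^ 3 * X 1) ∧
      (X 0 ^ 3 * X 1 : MvPolynomial (Fin 2) k) ∉ R₂alg k) ∧
    ¬ IsWeaklyArf (R₂alg k) ∧
    ¬ IsStrictlyClosed (R₂alg k) := by
  refine ⟨?_, ⟨hgen2 k, hgen3 k, hgen2y k,
      mem_nonZeroDivisors_of_ne_zero (pow_ne_zero _ (MvPolynomial.X_ne_zero 0)), by ring,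
      X3Y_not_mem k⟩, not_weaklyArf k, fun h => not_weaklyArf k h.isWeaklyArf⟩
  letI : Algebra (R₂alg k) K :=
    ((algebraMap (MvPolynomial (Fin 2) k) K).comp (R₂alg k).val.toRingHom).toAlgebra
  exact frac_and_ic k K rfl
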